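/- For every positive integer n, ∑_{k=1}^{n} (-1)^k * C(n,k) * C(n+k,k) * H_k = 2 * (-1)^n * H_n, where H_k = ∑_{i=1}^{k} 1/i is the k-th harmonic number. -/

import Mathlib

open Finset Polynomial

namespace AltHarm

/-! ### Cast product lemmas -/

lemma prod_sub_cast (j k : ℕ) : ∏ m ∈ range k, ((m:ℚ) - j) = (-1:ℚ)^k * (j.descFactorial k) := by
  rcases le_or_gt k j with h | h
  · rw [Nat.descFactorial_eq_prod_range]
    have : ∀ m ∈ range k, ((m:ℚ) - j) = -1 * ((j - m : ℕ) : ℚ) := by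
      intro m hm
      have : m ≤ j := le_trans (le_of_lt (mem_range.1 hm)) h
      push_cast [this]
      ring
    rw [Finset.prod_congr rfl this, Finset.prod_mul_distrib]
    push_cast
    simp
  · rw [Nat.descFactorial_eq_zero_iff_lt.2 h, Finset.prod_eq_zero (Finset.mem_range.2 h) (by simp)]
    simp

lemma prod_sub_cast2 (n k : ℕ) : ∏ i ∈ range k, ((n:ℚ) - i) = (n.descFactorial k : ℚ) := by
  rcases le_or_gt k n with h | h
  · rw [Nat.descFactorial_eq_prod_range]
    push_cast
    exact Finset.prod_congr rfl fun i hi => by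
      rw [Nat.cast_sub (le_trans (le_of_lt (mem_range.1 hi)) h)]
  · rw [Nat.descFactorial_eq_zero_iff_lt.2 h,
      Finset.prod_eq_zero (Finset.mem_range.2 h) (by simp)]
    simp

lemma prod_add_cast (a k : ℕ) : ∏ m ∈ range k, ((a:ℚ) + 1 + m) = ((a+k).descFactorial k : ℚ) := by
  rw [Nat.descFactorial_eq_prod_range]
  rw [← prod_range_reflect (fun m => ((a:ℚ) + 1 + m)) k]
  push_cast
  refine Finset.prod_congr rfl fun m hm => ?_
  have hm' : m < k := mem_range.1 hm
  have h2 : (a + k - m : ℕ) = a + 1 + (k - 1 - m) := by omega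
  rw [h2]
  push_cast
  ring

lemma prod_range_fact_cast (t : ℕ) : ∏ i ∈ range t, ((i:ℚ)+1) = (t.factorial : ℚ) := by
  induction t with
  | zero => simp
  | succ t ih => rw [Finset.prod_range_succ, ih, Nat.factorial_succ]; push_cast; ring

lemma prod_erase_sub_cast (n m : ℕ) (hm : m ≤ n) :
    ∏ l ∈ (range (n+1)).erase m, ((l:ℚ) - m)
      = (-1:ℚ)^m * (m.factorial : ℚ) * ((n-m).factorial : ℚ) := by
  have hsplit : (range (n+1)).erase m = (range m) ∪ (Ico (m+1) (n+1)) := by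
    ext l; simp only [mem_erase, mem_range, mem_union, mem_Ico]; omega
  have hdisj : Disjoint (range m) (Ico (m+1) (n+1)) := by
    rw [Finset.disjoint_left]; intro l hl hl'; simp only [mem_range, mem_Ico] at hl hl'; omega
  rw [hsplit, Finset.prod_union hdisj]
  have h1 : ∏ l ∈ range m, ((l:ℚ) - m) = (-1:ℚ)^m * (m.factorial : ℚ) := by
    have := prod_sub_cast m m
    rwa [Nat.descFactorial_self] at this
  have h2 : ∏ l ∈ Ico (m+1) (n+1), ((l:ℚ) - m) = ((n-m).factorial : ℚ) := by
    rw [Finset.prod_Ico_eq_prod_range]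
    have h3 : (n + 1 - (m+1)) = n - m := by omega
    rw [h3, ← prod_range_fact_cast]
    refine Finset.prod_congr rfl fun i _ => ?_
    push_cast; ring
  rw [h1, h2]

lemma prod_erase_div (s : Finset ℕ) (k : ℕ) (hk : k ∈ s) (g : ℕ → ℚ) (hg : g k ≠ 0) :
    ∏ m ∈ s.erase k, g m = (∏ m ∈ s, g m) / g k := by
  rw [← Finset.prod_erase_mul s g hk]; field_simp

/-! ### Polynomial generalities -/

lemma deriv_prod_linear (s : Finset ℕ) (c : ℕ → ℚ) :
    derivative (∏ m ∈ s, (X + C (c m))) = ∑ m ∈ s, ∏ l ∈ s.erase m, (X + C (c l)) := by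
  classical
  induction s using Finset.induction_on with
  | empty => simp
  | @insert k s' hk ih =>
    rw [Finset.prod_insert hk, derivative_mul, ih, Finset.sum_insert hk, Finset.erase_insert hk]
    simp only [derivative_add, derivative_X, derivative_C, add_zero, one_mul]
    rw [Finset.mul_sum]
    refine congrArg₂ (· + ·) rfl (Finset.sum_congr rfl fun m hm => ?_)
    rw [Finset.erase_insert_of_ne (by rintro rfl; exact hk hm)]
    rw [Finset.prod_insert (fun h => hk (Finset.mem_of_mem_erase h))]

lemma degree_prod_linear (s : Finset ℕ) (c : ℕ → ℚ) :
    (∏ m ∈ s, (X + C (c m))).degree = (s.card : WithBot ℕ) := by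
  rw [Polynomial.degree_prod]
  simp [Polynomial.degree_X_add_C]

lemma degree_term_lt (N : ℕ) (a : ℚ) (t : Finset ℕ) (c : ℕ → ℚ) (h : t.card < N) :
    (C a * ∏ m ∈ t, (X + C (c m))).degree < (N : WithBot ℕ) := by
  apply lt_of_le_of_lt (Polynomial.degree_mul_le _ _)
  rw [degree_prod_linear]
  calc (C a).degree + (t.card : WithBot ℕ) ≤ 0 + (t.card : WithBot ℕ) := by
        gcongr; exact Polynomial.degree_C_le
    _ = (t.card : WithBot ℕ) := by rw [zero_add]
    _ < (N : WithBot ℕ) := by exact_mod_cast h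

lemma degree_sum_term_lt (N : ℕ) (s : Finset ℕ) (a : ℕ → ℚ) (t : ℕ → Finset ℕ) (c : ℕ → ℕ → ℚ)
    (h : ∀ k ∈ s, (t k).card < N) :
    (∑ k ∈ s, C (a k) * ∏ m ∈ t k, (X + C (c k m))).degree < (N : WithBot ℕ) := by
  apply lt_of_le_of_lt (Polynomial.degree_sum_le _ _)
  rw [Finset.sup_lt_iff (by exact_mod_cast WithBot.bot_lt_coe N)]
  intro k hk
  exact degree_term_lt N _ _ _ (h k hk)

/-! ### Combinatorial facts -/

lemma key_fact (n m : ℕ) (hm : m ≤ n) :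
    n.choose m * ((n+m).choose m) * m.factorial * (n-m).factorial
      = (n+m).descFactorial n := by
  have h1 : n.choose m * m.factorial * (n-m).factorial = n.factorial :=
    Nat.choose_mul_factorial_mul_factorial hm
  have h2 : (n+m).choose m * m.factorial * ((n+m)-m).factorial = (n+m).factorial :=
    Nat.choose_mul_factorial_mul_factorial (Nat.le_add_left m n)
  have h3 : ((n+m)-n).factorial * (n+m).descFactorial n = (n+m).factorial :=
    Nat.factorial_mul_descFactorial (Nat.le_add_right n m)
  have hmf : 0 < m.factorial := Nat.factorial_pos m
  apply Nat.eq_of_mul_eq_mul_left hmf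
  calc m.factorial * (n.choose m * ((n+m).choose m) * m.factorial * (n-m).factorial)
      = ((n+m).choose m * m.factorial * n.factorial) := by
        rw [← h1]; ring
    _ = m.factorial * ((n+m).descFactorial n) := by
        rw [show (n+m) - m = n by omega] at h2
        rw [show (n+m) - n = m by omega] at h3
        rw [h2, ← h3]

lemma vand (n j : ℕ) : ∑ k ∈ range (n+1), (n.choose k) * (j.choose k) = (n+j).choose n := by
  rw [Nat.add_choose_eq, Finset.Nat.sum_antidiagonal_eq_sum_range_succ_mk]
  rw [← Finset.sum_range_reflect]
  refine Finset.sum_congr rfl fun k hk => ?_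
  have hk' : k ≤ n := by simpa [Nat.lt_succ_iff] using hk
  have h1 : n + 1 - 1 - k = n - k := by omega
  rw [h1, Nat.choose_symm hk']

/-! ### The coefficients -/

noncomputable def fq (n k : ℕ) : ℚ := (-1:ℚ)^k * (n.choose k) * ((n+k).choose k)

noncomputable def aco (n k : ℕ) : ℚ :=
  (-1:ℚ)^k * (n.choose k) * ((n.factorial : ℚ) / (k.factorial : ℚ))

/-! ### The N identity -/

lemma N_poly (n : ℕ) :
    (∑ k ∈ range (n+1), C (fq n k) * ∏ m ∈ (range (n+1)).erase k, (X + C (m:ℚ)))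
      = C ((-1:ℚ)^n) * ∏ i ∈ range n, (X + C (-((i:ℚ)+1))) := by
  apply Polynomial.eq_of_degrees_lt_of_eval_index_eq (s := range (n+1))
    (v := fun m : ℕ => -(m:ℚ))
  · intro a _ b _ h
    have : (a:ℚ) = b := by simpa [neg_inj] using h
    exact_mod_cast this
  · rw [Finset.card_range]
    exact degree_sum_term_lt (n+1) _ _ _ (fun _ m => (m:ℚ)) (fun k hk => by
      rw [Finset.card_erase_of_mem hk, Finset.card_range]; omega)
  · rw [Finset.card_range]
    exact degree_term_lt (n+1) _ _ _ (by rw [Finset.card_range]; omega)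
  · intro m hm
    have hmn : m ≤ n := by simpa [Nat.lt_succ_iff] using hm
    simp only [eval_finset_sum, eval_mul, eval_prod, eval_add, eval_C, eval_X]
    rw [Finset.sum_eq_single m ?h1 ?h2]
    · have hL : ∏ l ∈ (range (n+1)).erase m, (-(m:ℚ) + l)
          = (-1:ℚ)^m * (m.factorial : ℚ) * ((n-m).factorial : ℚ) := by
        rw [← prod_erase_sub_cast n m hmn]
        exact Finset.prod_congr rfl fun l _ => by ring
      rw [hL]
      have hR : ∏ i ∈ range n, (-(m:ℚ) + -((i:ℚ)+1))
          = (-1:ℚ)^n * ((m+n).descFactorial n : ℚ) := by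
        rw [← prod_add_cast m n]
        rw [show ((-1:ℚ)^n * ∏ m_1 ∈ range n, ((m:ℚ) + 1 + m_1))
            = ∏ m_1 ∈ range n, (-1 * ((m:ℚ) + 1 + m_1)) by
          rw [Finset.prod_mul_distrib]; simp]
        exact Finset.prod_congr rfl fun i _ => by ring
      rw [hR, fq]
      have := key_fact n m hmn
      have hcast : ((n.choose m : ℚ)) * ((n+m).choose m) * (m.factorial) * ((n-m).factorial)
          = ((n+m).descFactorial n : ℚ) := by exact_mod_cast congrArg (Nat.cast (R := ℚ)) this
      rw [show m + n = n + m by omega]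
      calc (-1:ℚ)^m * (n.choose m) * ((n+m).choose m)
            * ((-1:ℚ)^m * (m.factorial : ℚ) * ((n-m).factorial : ℚ))
          = ((-1:ℚ)^m * (-1:ℚ)^m) * ((n.choose m : ℚ) * ((n+m).choose m)
            * (m.factorial) * ((n-m).factorial)) := by ring
        _ = (-1:ℚ)^n * ((-1:ℚ)^n * ((n+m).descFactorial n : ℚ)) := by
            rw [← pow_add, hcast, Even.neg_one_pow ⟨m, rfl⟩, ← mul_assoc, ← pow_add,
              Even.neg_one_pow ⟨n, rfl⟩]
    · intro k hk hkm
      apply mul_eq_zero_of_right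
      apply Finset.prod_eq_zero (Finset.mem_erase.2 ⟨Ne.symm hkm, hm⟩)
      ring
    · intro h; exact absurd hm h

lemma N_vanish (n j : ℕ) (hj1 : 1 ≤ j) (hjn : j ≤ n) :
    ∑ k ∈ range (n+1), fq n k / ((j:ℚ) + k) = 0 := by
  have h := congrArg (eval (j:ℚ)) (N_poly n)
  simp only [eval_finset_sum, eval_mul, eval_prod, eval_add, eval_C, eval_X] at h
  have hR : ∏ i ∈ range n, ((j:ℚ) + -((i:ℚ)+1)) = 0 := by
    apply Finset.prod_eq_zero (mem_range.2 (show j - 1 < n by omega))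
    have : ((j-1:ℕ):ℚ) = (j:ℚ) - 1 := by
      push_cast [Nat.cast_sub hj1]; ring
    rw [this]; ring
  rw [hR, mul_zero] at h
  set D := ∏ m ∈ range (n+1), ((j:ℚ) + m) with hD
  have hDpos : 0 < D := Finset.prod_pos (fun m _ => by positivity)
  have hterm : ∀ k ∈ range (n+1),
      fq n k * ∏ m ∈ (range (n+1)).erase k, ((j:ℚ) + m) = D * (fq n k / ((j:ℚ)+k)) := by
    intro k hk
    rw [prod_erase_div _ k hk (fun m => (j:ℚ)+m) (by positivity)]
    field_simp
    rw [← hD]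
  rw [Finset.sum_congr rfl hterm, ← Finset.mul_sum] at h
  rcases mul_eq_zero.1 h with h' | h'
  · exact absurd h' (ne_of_gt hDpos)
  · exact h'

lemma II (n : ℕ) :
    ∑ k ∈ range (n+1), fq n k * (∑ j ∈ Icc 1 n, 1/((j:ℚ) + k)) = 0 := by
  have : ∀ k ∈ range (n+1), fq n k * (∑ j ∈ Icc 1 n, 1/((j:ℚ) + k))
      = ∑ j ∈ Icc 1 n, fq n k / ((j:ℚ) + k) := by
    intro k _
    rw [Finset.mul_sum]
    exact Finset.sum_congr rfl fun j _ => by rw [mul_one_div]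
  rw [Finset.sum_congr rfl this, Finset.sum_comm]
  refine Finset.sum_eq_zero fun j hj => ?_
  simp only [mem_Icc] at hj
  exact N_vanish n j hj.1 hj.2

/-! ### The A identity -/

lemma A_poly (n : ℕ) :
    (∑ k ∈ range (n+1), C (aco n k) * ∏ m ∈ range k, (X + C ((m:ℚ)+1)))
      = C ((-1:ℚ)^n) * ∏ i ∈ range n, (X + C (-(i:ℚ))) := by
  apply Polynomial.eq_of_degrees_lt_of_eval_index_eq (s := range (n+1))
    (v := fun j : ℕ => -((j:ℚ)+1))
  · intro a _ b _ h
    have : (a:ℚ) = b := by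
      have := neg_injective h
      linarith [this]
    exact_mod_cast this
  · rw [Finset.card_range]
    exact degree_sum_term_lt (n+1) _ _ _ (fun _ m => (m:ℚ)+1) (fun k hk => by
      rw [Finset.card_range]; simpa [Nat.lt_succ_iff] using hk)
  · rw [Finset.card_range]
    exact degree_term_lt (n+1) _ _ _ (by rw [Finset.card_range]; omega)
  · intro j _
    simp only [eval_finset_sum, eval_mul, eval_prod, eval_add, eval_C, eval_X]
    have hL : ∀ k ∈ range (n+1),
        aco n k * ∏ m ∈ range k, (-((j:ℚ)+1) + ((m:ℚ)+1))
          = (n.factorial : ℚ) * ((n.choose k) * (j.choose k)) := by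
      intro k _
      have hp : ∏ m ∈ range k, (-((j:ℚ)+1) + ((m:ℚ)+1))
          = (-1:ℚ)^k * (j.descFactorial k) := by
        rw [← prod_sub_cast j k]
        exact Finset.prod_congr rfl fun m _ => by ring
      rw [hp, aco, Nat.descFactorial_eq_factorial_mul_choose]
      have hkf : (k.factorial : ℚ) ≠ 0 := by exact_mod_cast (Nat.factorial_pos k).ne'
      have hsq : ((-1:ℚ)^k)*((-1:ℚ)^k) = 1 := by
        rw [← pow_add]; exact Even.neg_one_pow ⟨k, rfl⟩
      push_cast
      calc (-1:ℚ)^k * (n.choose k) * ((n.factorial : ℚ)/(k.factorial))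
            * ((-1:ℚ)^k * ((k.factorial :ℚ) * (j.choose k)))
          = ((-1:ℚ)^k * (-1:ℚ)^k) * ((n.choose k) * (j.choose k)
            * (((n.factorial : ℚ)/(k.factorial)) * (k.factorial))) := by ring
        _ = (n.factorial : ℚ) * ((n.choose k) * (j.choose k)) := by
            rw [hsq, one_mul, div_mul_cancel₀ _ hkf]; ring
    rw [Finset.sum_congr rfl hL, ← Finset.mul_sum]
    have hv : ∑ k ∈ range (n+1), ((n.choose k : ℚ) * (j.choose k)) = ((n+j).choose n : ℚ) := by
      exact_mod_cast congrArg (Nat.cast (R := ℚ)) (vand n j)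
    rw [hv]
    have hR : ∏ i ∈ range n, (-((j:ℚ)+1) + -(i:ℚ))
        = (-1:ℚ)^n * ((j+n).descFactorial n : ℚ) := by
      rw [← prod_add_cast j n]
      rw [show ((-1:ℚ)^n * ∏ m ∈ range n, ((j:ℚ) + 1 + m))
          = ∏ m ∈ range n, (-1 * ((j:ℚ) + 1 + m)) by
        rw [Finset.prod_mul_distrib]; simp]
      exact Finset.prod_congr rfl fun i _ => by ring
    rw [hR, ← mul_assoc, ← pow_add, Even.neg_one_pow ⟨n, rfl⟩, one_mul]
    rw [Nat.descFactorial_eq_factorial_mul_choose]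
    rw [show j + n = n + j by omega]
    push_cast
    ring

lemma prod_nk (n k : ℕ) : ∏ m ∈ range k, ((n:ℚ) + ((m:ℚ)+1))
    = (k.factorial : ℚ) * ((n+k).choose k) := by
  have h : ∏ m ∈ range k, ((n:ℚ) + ((m:ℚ)+1)) = ((n+k).descFactorial k : ℚ) := by
    rw [← prod_add_cast n k]
    exact Finset.prod_congr rfl fun m _ => by ring
  rw [h, Nat.descFactorial_eq_factorial_mul_choose]
  push_cast; ring

lemma aco_mul (n k : ℕ) : aco n k * ((k.factorial : ℚ) * ((n+k).choose k))
    = (n.factorial : ℚ) * fq n k := by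
  have hkf : (k.factorial : ℚ) ≠ 0 := by exact_mod_cast (Nat.factorial_pos k).ne'
  rw [aco, fq]
  field_simp

lemma III (n : ℕ) : ∑ k ∈ range (n+1), fq n k = (-1:ℚ)^n := by
  have h := congrArg (eval (n:ℚ)) (A_poly n)
  simp only [eval_finset_sum, eval_mul, eval_prod, eval_add, eval_C, eval_X] at h
  have hL : ∀ k ∈ range (n+1), aco n k * ∏ m ∈ range k, ((n:ℚ) + ((m:ℚ)+1))
      = (n.factorial : ℚ) * fq n k := by
    intro k _
    rw [prod_nk, aco_mul]
  rw [Finset.sum_congr rfl hL, ← Finset.mul_sum] at h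
  have hR : ∏ i ∈ range n, ((n:ℚ) + -(i:ℚ)) = (n.factorial : ℚ) := by
    have h2 : ∏ i ∈ range n, ((n:ℚ) + -(i:ℚ)) = (n.descFactorial n : ℚ) := by
      rw [← prod_sub_cast2 n n]
      exact Finset.prod_congr rfl fun i _ => by ring
    rw [h2, Nat.descFactorial_self]
  rw [hR] at h
  have hnf : (n.factorial : ℚ) ≠ 0 := by exact_mod_cast (Nat.factorial_pos n).ne'
  have h2 : (n.factorial : ℚ) * (∑ k ∈ range (n+1), fq n k)
      = (n.factorial : ℚ) * ((-1:ℚ)^n) := by rw [h]; ring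
  exact mul_left_cancel₀ hnf h2

lemma sum_inv_reflect (n : ℕ) :
    ∑ i ∈ range n, 1/((n:ℚ) - i) = ∑ i ∈ range n, 1/((i:ℚ)+1) := by
  rw [← Finset.sum_range_reflect (fun i => 1/((i:ℚ)+1)) n]
  refine Finset.sum_congr rfl fun i hi => ?_
  have hi' : i < n := mem_range.1 hi
  have : ((n - 1 - i : ℕ) : ℚ) + 1 = (n:ℚ) - i := by
    have : ((n - 1 - i : ℕ) : ℚ) = (n:ℚ) - 1 - i := by
      have hn : (n - 1 - i : ℕ) + (1 + i) = n := by omega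
      have := congrArg (Nat.cast (R := ℚ)) hn
      push_cast at this
      linarith
    rw [this]; ring
  rw [this]

lemma I (n : ℕ) :
    ∑ k ∈ range (n+1), fq n k * (∑ j ∈ range k, 1/((n:ℚ) + ((j:ℚ)+1)))
      = (-1:ℚ)^n * (∑ i ∈ range n, 1/((i:ℚ)+1)) := by
  have h := congrArg (fun p => eval (n:ℚ) (derivative p)) (A_poly n)
  simp only [derivative_sum, derivative_mul, derivative_C, zero_mul, zero_add,
    deriv_prod_linear, eval_finset_sum, eval_mul, eval_prod, eval_add, eval_C, eval_X] at h
  have hL : ∀ k ∈ range (n+1),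
      aco n k * ∑ j ∈ range k, ∏ l ∈ (range k).erase j, ((n:ℚ) + ((l:ℚ)+1))
        = (n.factorial : ℚ) * (fq n k * (∑ j ∈ range k, 1/((n:ℚ) + ((j:ℚ)+1)))) := by
    intro k _
    have hin : ∀ j ∈ range k, ∏ l ∈ (range k).erase j, ((n:ℚ) + ((l:ℚ)+1))
        = ((k.factorial : ℚ) * ((n+k).choose k)) * (1/((n:ℚ) + ((j:ℚ)+1))) := by
      intro j hj
      rw [prod_erase_div _ j hj (fun l => (n:ℚ) + ((l:ℚ)+1)) (by positivity), prod_nk]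
      ring
    rw [Finset.sum_congr rfl hin, ← Finset.mul_sum, ← mul_assoc, aco_mul, mul_assoc]
  rw [Finset.sum_congr rfl hL, ← Finset.mul_sum] at h
  have hR : ∀ i ∈ range n, ∏ l ∈ (range n).erase i, ((n:ℚ) + -(l:ℚ))
      = (n.factorial : ℚ) * (1/((n:ℚ) - i)) := by
    intro i hi
    have hpos : ∀ l ∈ range n, (0:ℚ) < (n:ℚ) + -(l:ℚ) := by
      intro l hl
      have : l < n := mem_range.1 hl
      have : (l:ℚ) < n := by exact_mod_cast this
      linarith
    rw [prod_erase_div _ i hi (fun l => (n:ℚ) + -(l:ℚ)) (ne_of_gt (hpos i hi))]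
    have hQ : ∏ l ∈ range n, ((n:ℚ) + -(l:ℚ)) = (n.factorial : ℚ) := by
      have h2 : ∏ l ∈ range n, ((n:ℚ) + -(l:ℚ)) = (n.descFactorial n : ℚ) := by
        rw [← prod_sub_cast2 n n]
        exact Finset.prod_congr rfl fun l _ => by ring
      rw [h2, Nat.descFactorial_self]
    rw [hQ]
    ring
  rw [Finset.sum_congr rfl hR, ← Finset.mul_sum] at h
  have hsum : ∑ i ∈ range n, 1/((n:ℚ) - i) = ∑ i ∈ range n, 1/((i:ℚ)+1) := sum_inv_reflect n
  rw [hsum] at h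
  have hnf : (n.factorial : ℚ) ≠ 0 := by exact_mod_cast (Nat.factorial_pos n).ne'
  have h2 : (n.factorial : ℚ) * (∑ k ∈ range (n+1), fq n k * (∑ j ∈ range k, 1/((n:ℚ) + ((j:ℚ)+1))))
      = (n.factorial : ℚ) * ((-1:ℚ)^n * (∑ i ∈ range n, 1/((i:ℚ)+1))) := by rw [h]; ring
  exact mul_left_cancel₀ hnf h2

/-! ### Harmonic numbers -/

noncomputable def Hq (m : ℕ) : ℚ := ∑ i ∈ Icc 1 m, (1:ℚ)/i

lemma Hq_range (m : ℕ) : Hq m = ∑ i ∈ range m, 1/((i:ℚ)+1) := by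
  rw [Hq, show Icc 1 m = Ico 1 (m+1) from (Finset.Ico_add_one_right_eq_Icc 1 m).symm,
    Finset.sum_Ico_eq_sum_range]
  refine Finset.sum_congr (by rw [Nat.add_sub_cancel]) fun i _ => ?_
  push_cast
  rw [add_comm]

lemma Hq_add (a b : ℕ) : Hq (a+b) = Hq a + ∑ j ∈ range b, 1/((a:ℚ)+((j:ℚ)+1)) := by
  rw [Hq, Hq, show Icc 1 (a+b) = Ico 1 (a+b+1) from (Finset.Ico_add_one_right_eq_Icc _ _).symm,
    show Icc 1 a = Ico 1 (a+1) from (Finset.Ico_add_one_right_eq_Icc _ _).symm]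
  rw [← Finset.sum_Ico_consecutive (fun i : ℕ => (1:ℚ)/i) (by omega : 1 ≤ a+1)
    (by omega : a+1 ≤ a+b+1)]
  congr 1
  rw [Finset.sum_Ico_eq_sum_range]
  refine Finset.sum_congr (by congr 1; omega) fun j _ => ?_
  push_cast
  ring_nf

lemma S2_eq (n k : ℕ) : ∑ j ∈ Icc 1 n, 1/((j:ℚ)+k)
    = ∑ j ∈ range n, 1/((k:ℚ)+((j:ℚ)+1)) := by
  rw [show Icc 1 n = Ico 1 (n+1) from (Finset.Ico_add_one_right_eq_Icc _ _).symm,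
    Finset.sum_Ico_eq_sum_range]
  refine Finset.sum_congr (by rw [Nat.add_sub_cancel]) fun j _ => ?_
  push_cast
  ring_nf

lemma Hq_split (n k : ℕ) : Hq k = Hq n + (∑ j ∈ range k, 1/((n:ℚ)+((j:ℚ)+1)))
    - (∑ j ∈ Icc 1 n, 1/((j:ℚ)+k)) := by
  have h1 := Hq_add n k
  have h2 := Hq_add k n
  rw [add_comm n k] at h1
  rw [h1] at h2
  rw [S2_eq n k]
  linarith [h2]

end AltHarm

theorem alternating_sum_binom_harmonic (n : ℕ) (hn : 0 < n) :
    ∑ k ∈ Finset.Icc 1 n,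
      (-1 : ℚ) ^ k * (Nat.choose n k) * (Nat.choose (n + k) k) *
        (∑ i ∈ Finset.Icc 1 k, (1 : ℚ) / i)
    = 2 * (-1 : ℚ) ^ n * (∑ i ∈ Finset.Icc 1 n, (1 : ℚ) / i) := by
  have step1 : ∑ k ∈ Finset.Icc 1 n,
      (-1 : ℚ) ^ k * (Nat.choose n k) * (Nat.choose (n + k) k) *
        (∑ i ∈ Finset.Icc 1 k, (1 : ℚ) / i)
      = ∑ k ∈ Finset.Icc 1 n, AltHarm.fq n k * AltHarm.Hq k := by
    refine Finset.sum_congr rfl fun k _ => ?_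
    rw [AltHarm.fq, AltHarm.Hq]
  have step2 : ∑ k ∈ Finset.Icc 1 n, AltHarm.fq n k * AltHarm.Hq k
      = ∑ k ∈ Finset.range (n+1), AltHarm.fq n k * AltHarm.Hq k := by
    apply Finset.sum_subset
    · intro x hx
      simp only [Finset.mem_Icc] at hx
      exact Finset.mem_range.2 (by omega)
    · intro x hx hnx
      simp only [Finset.mem_range] at hx
      simp only [Finset.mem_Icc] at hnx
      have : x = 0 := by omega
      subst this
      simp [AltHarm.Hq]
  have step3 : ∑ k ∈ Finset.range (n+1), AltHarm.fq n k * AltHarm.Hq k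
      = (∑ k ∈ Finset.range (n+1), AltHarm.fq n k) * AltHarm.Hq n
        + (∑ k ∈ Finset.range (n+1),
            AltHarm.fq n k * (∑ j ∈ Finset.range k, 1/((n:ℚ)+((j:ℚ)+1))))
        - (∑ k ∈ Finset.range (n+1),
            AltHarm.fq n k * (∑ j ∈ Finset.Icc 1 n, 1/((j:ℚ)+k))) := by
    rw [Finset.sum_mul, ← Finset.sum_add_distrib, ← Finset.sum_sub_distrib]
    refine Finset.sum_congr rfl fun k _ => ?_
    rw [AltHarm.Hq_split n k]
    ring
  rw [step1, step2, step3, AltHarm.III n, AltHarm.I n, AltHarm.II n, ← AltHarm.Hq_range]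
  rw [AltHarm.Hq]
  ring
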